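/- For each n ∈ ℕ let ξ^{(n)} ∈ stdSimplex ℝ (Fin (n+1)) be given, let f_n(x)_j = x_j + x_{n+1}·ξ^{(n)}_j, and let Δ ⊆ Π_n (Fin (n+1) → ℝ) be the corresponding inverse limit. For each n ∈ ℕ, the unique element e_n ∈ Δ with f_{∞,m}(e_n) = e_n^{(m)} for all m ≥ n (where e_n^{(m)} is the standard basis vector) is an extreme point of the convex set Δ. -/

import Mathlib

/-- In the inverse limit `Δ` of the standard simplices along the affine maps
`f_n(x)_j = x_j + x_{n+1}·ξ^{(n)}_j`, the element `e_n` (whose `m`-th coordinate is the `n`-th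
standard basis vector for all `m ≥ n`) is an extreme point of the convex set `Δ`. -/
theorem stmt_5 (ξ : ∀ n : ℕ, Fin (n + 1) → ℝ)
    (hξ : ∀ n, ξ n ∈ stdSimplex ℝ (Fin (n + 1)))
    (Δ : Set (∀ n, Fin (n + 1) → ℝ))
    (hΔ : Δ = {x | (∀ n, x n ∈ stdSimplex ℝ (Fin (n + 1))) ∧
      ∀ n, ∀ j : Fin (n + 1),
        x (n + 1) j.castSucc + x (n + 1) (Fin.last (n + 1)) * ξ n j = x n j})
    (n : ℕ) (e : ∀ m, Fin (m + 1) → ℝ) (heΔ : e ∈ Δ)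
    (he : ∀ m, n ≤ m → ∀ j : Fin (m + 1), e m j = if (j : ℕ) = n then 1 else 0) :
    e ∈ Δ.extremePoints ℝ := by
  subst hΔ
  refine ⟨heΔ, ?_⟩
  rintro y hy z hz ⟨a, b, ha, hb, hab, hsum⟩
  have heq : ∀ m (j : Fin (m + 1)), a * y m j + b * z m j = e m j := by
    intro m j
    have := congrFun (congrFun hsum m) j
    simpa using this
  -- For m ≥ n, the coordinates of y and z agree with e (vertex is extreme in the simplex)
  have high : ∀ m, n ≤ m → y m = e m ∧ z m = e m := by
    intro m hm
    have hzero : ∀ j : Fin (m + 1), (j : ℕ) ≠ n → y m j = 0 ∧ z m j = 0 := by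
      intro j hj
      have he0 : e m j = 0 := by rw [he m hm j, if_neg hj]
      have h := heq m j
      have hy0 : 0 ≤ y m j := (hy.1 m).1 j
      have hz0 : 0 ≤ z m j := (hz.1 m).1 j
      rw [he0] at h
      constructor <;> nlinarith
    have hn : n < m + 1 := Nat.lt_succ_of_le hm
    set jn : Fin (m + 1) := ⟨n, hn⟩ with hjn
    have hys : ∑ j, y m j = 1 := (hy.1 m).2
    have hzs : ∑ j, z m j = 1 := (hz.1 m).2
    have hysingle : ∑ j, y m j = y m jn :=
      Finset.sum_eq_single_of_mem jn (Finset.mem_univ _)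
        (fun i _ hi => (hzero i (fun h => hi (Fin.ext h))).1)
    have hzsingle : ∑ j, z m j = z m jn :=
      Finset.sum_eq_single_of_mem jn (Finset.mem_univ _)
        (fun i _ hi => (hzero i (fun h => hi (Fin.ext h))).2)
    constructor <;> funext j <;> rw [he m hm j] <;> by_cases hc : (j : ℕ) = n
    · have : j = jn := Fin.ext hc
      rw [if_pos hc, this, ← hysingle, hys]
    · rw [if_neg hc]; exact (hzero j hc).1
    · have : j = jn := Fin.ext hc
      rw [if_pos hc, this, ← hzsingle, hzs]
    · rw [if_neg hc]; exact (hzero j hc).2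
  -- Downward step: coordinates at m are determined by those at m + 1
  have step : ∀ m, (y (m + 1) = e (m + 1) ∧ z (m + 1) = e (m + 1)) →
      y m = e m ∧ z m = e m := by
    intro m ⟨h1, h2⟩
    constructor <;> funext j
    · rw [← hy.2 m j, h1, heΔ.2 m j]
    · rw [← hz.2 m j, h2, heΔ.2 m j]
  have byk : ∀ k m, m + k = n → y m = e m ∧ z m = e m := by
    intro k
    induction k with
    | zero => intro m hm; rw [Nat.add_zero] at hm; subst hm; exact high m le_rfl
    | succ k ih => intro m hm; exact step m (ih (m + 1) (by omega))
  have all : ∀ m, y m = e m ∧ z m = e m := by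
    intro m
    rcases le_or_gt n m with h | h
    · exact high m h
    · exact byk (n - m) m (by omega)
  exact funext fun m => (all m).1
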